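/- Let R be a commutative ring with identity, S a multiplicatively closed subset of R, and M an R-module. Then M is a fully S-idempotent R-module if and only if M is a fully S*-idempotent R-module, where S* = {x ∈ R : x/1 is a unit of S⁻¹R} is the saturation of S. -/

import Mathlib

open Pointwise
/-- A submodule `N` of `M` is `S`-idempotent if there is `s ∈ S` with
`s • N ⊆ (N :_R M)² M ⊆ N`. -/
def Submodule.SIdempotent {R M : Type*} [CommRing R] [AddCommGroup M] [Module R M]
    (S : Submonoid R) (N : Submodule R M) : Prop :=
  ∃ s ∈ S, s • N ≤ (N.colon ⊤) ^ 2 • (⊤ : Submodule R M) ∧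
    (N.colon ⊤) ^ 2 • (⊤ : Submodule R M) ≤ N

/-- `M` is fully `S`-idempotent if every submodule is `S`-idempotent. -/
def Module.FullySIdempotent (R M : Type*) [CommRing R] [AddCommGroup M] [Module R M]
    (S : Submonoid R) : Prop :=
  ∀ N : Submodule R M, N.SIdempotent S

/-- The saturation `S* = {x ∈ R : x/1 is a unit of S⁻¹R}` of `S`. -/
def Submonoid.locSaturation {R : Type*} [CommRing R] (S : Submonoid R) : Submonoid R where
  carrier := {x : R | IsUnit (algebraMap R (Localization S) x)}
  one_mem' := by simp
  mul_mem' := fun hx hy => by simpa [map_mul] using hx.mul hy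

/-- `M` is fully `S`-idempotent iff `M` is fully `S*`-idempotent, where `S*` is the
saturation of `S`. -/
lemma Submonoid.le_saturation {R : Type*} [CommRing R] (S : Submonoid R) :
    S ≤ S.locSaturation := fun s hs =>
  IsLocalization.map_units (Localization S) (⟨s, hs⟩ : S)

lemma Submonoid.exists_mul_mem_of_mem_saturation {R : Type*} [CommRing R] (S : Submonoid R)
    {t : R} (ht : t ∈ S.locSaturation) : ∃ r : R, r * t ∈ S := by
  obtain ⟨u, hu⟩ := ht
  obtain ⟨⟨a, s⟩, ha⟩ := IsLocalization.surj S (↑u⁻¹ : Localization S)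
  have h1 : algebraMap R (Localization S) (t * a) = algebraMap R (Localization S) s := by
    have : (u : Localization S) * (↑u⁻¹ : Localization S) = 1 := by
      rw [← Units.val_mul, mul_inv_cancel, Units.val_one]
    calc algebraMap R (Localization S) (t * a)
        = (u : Localization S) * ((↑u⁻¹ : Localization S) * algebraMap R _ s) := by
          rw [ha, map_mul, hu]
      _ = algebraMap R (Localization S) s := by rw [← mul_assoc, this, one_mul]
  obtain ⟨c, hc⟩ := (IsLocalization.eq_iff_exists S (Localization S)).mp h1
  refine ⟨(c : R) * a, ?_⟩
  have : (c : R) * a * t = (c : R) * s := by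
    have := hc
    ring_nf at this
    linear_combination this
  rw [this]
  exact S.mul_mem c.2 s.2

theorem fullySIdempotent_iff_saturation
    {R M : Type*} [CommRing R] [AddCommGroup M] [Module R M] (S : Submonoid R) :
    Module.FullySIdempotent R M S ↔ Module.FullySIdempotent R M S.locSaturation := by
  constructor
  · intro h N
    obtain ⟨s, hs, h1, h2⟩ := h N
    exact ⟨s, S.le_saturation hs, h1, h2⟩
  · intro h N
    obtain ⟨t, ht, h1, h2⟩ := h N
    obtain ⟨r, hr⟩ := S.exists_mul_mem_of_mem_saturation ht
    refine ⟨r * t, hr, ?_, h2⟩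
    calc (r * t) • N = r • t • N := by rw [mul_smul]
      _ ≤ t • N := Submodule.smul_le_self_of_tower r (t • N)
      _ ≤ _ := h1
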